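/- Let H, K₁, K₂ be real Hilbert spaces and A : H → K₁ × K₂ a continuous linear map with dense range and adjoint A*. Let c₁ ∈ K₁, c₂ ∈ K₂ and ρ₁, ρ₂ > 0, and let C := {(a,b) : ‖a − c₁‖ ≤ ρ₁ and ‖b − c₂‖ ≤ ρ₂}. Then the primal value and the dual value coincide with opposite sign: inf {½‖w‖²_H : w ∈ H, A w ∈ C} = − inf {½‖A*(f⁰,f¹)‖²_H − ⟨f⁰, c₁⟩ − ⟨f¹, c₂⟩ + ρ₁‖f⁰‖ + ρ₂‖f¹‖ : (f⁰,f¹) ∈ K₁ × K₂}. -/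

import Mathlib

open scoped RealInnerProductSpace

theorem WithLp.equiv_symm_fst {p : ENNReal} {α β : Type*} (x : α × β) :
    ((WithLp.equiv p (α × β)).symm x).fst = x.fst := rfl

theorem WithLp.equiv_symm_snd {p : ENNReal} {α β : Type*} (x : α × β) :
    ((WithLp.equiv p (α × β)).symm x).snd = x.snd := rfl

set_option maxHeartbeats 4000000 in
lemma stmt13_key {H K₁ K₂ : Type*}
    [NormedAddCommGroup H] [InnerProductSpace ℝ H] [CompleteSpace H]
    [NormedAddCommGroup K₁] [InnerProductSpace ℝ K₁] [CompleteSpace K₁]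
    [NormedAddCommGroup K₂] [InnerProductSpace ℝ K₂] [CompleteSpace K₂]
    (A₁ : H →L[ℝ] K₁) (A₂ : H →L[ℝ] K₂)
    (c₁ : K₁) (c₂ : K₂) (ρ₁ ρ₂ : ℝ)
    (wb : H) (δ : ℝ) (hδ : 0 < δ)
    (hs1 : ‖A₁ wb - c₁‖ ≤ ρ₁ - δ) (hs2 : ‖A₂ wb - c₂‖ ≤ ρ₂ - δ)
    {ε : ℝ} (hε : 0 < ε) :
    ∃ f : K₁ × K₂, ∃ w : H, (‖A₁ w - c₁‖ ≤ ρ₁ ∧ ‖A₂ w - c₂‖ ≤ ρ₂) ∧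
      ((1 / 2) * ‖ContinuousLinearMap.adjoint A₁ f.1
              + ContinuousLinearMap.adjoint A₂ f.2‖ ^ 2
            - ⟪f.1, c₁⟫ - ⟪f.2, c₂⟫ + ρ₁ * ‖f.1‖ + ρ₂ * ‖f.2‖)
        + (1 / 2) * ‖w‖ ^ 2 ≤ ε := by
  classical
  set M : ℝ := ‖wb‖ with hM
  have hM0 : 0 ≤ M := norm_nonneg _
  set s : ℝ := max 1 (2 * M ^ 3 / (δ * ε)) with hsdef
  have hs1' : (1 : ℝ) ≤ s := le_max_left _ _
  have hs0 : 0 < s := lt_of_lt_of_le one_pos hs1'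
  have hsne : s ≠ 0 := hs0.ne'
  have hsbig : 2 * M ^ 3 ≤ s * (δ * ε) := by
    have h := le_max_right 1 (2 * M ^ 3 / (δ * ε))
    rw [div_le_iff₀ (by positivity)] at h
    linarith [h.trans_eq rfl]
  -- the ambient L² product space
  set D : Set (WithLp 2 (H × WithLp 2 (K₁ × K₂))) :=
    {p | ‖A₁ p.fst - s⁻¹ • p.snd.fst - c₁‖ ≤ ρ₁ ∧
         ‖A₂ p.fst - s⁻¹ • p.snd.snd - c₂‖ ≤ ρ₂} with hD
  set pbar : WithLp 2 (H × WithLp 2 (K₁ × K₂)) :=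
    (WithLp.equiv 2 _).symm (wb, 0) with hpbar
  have hpbarD : pbar ∈ D := by
    constructor <;> simp [pbar, D, WithLp.zero_fst, WithLp.zero_snd] <;> linarith
  have hpbarnorm : ‖pbar‖ = M := by
    rw [hpbar, hM]
    exact WithLp.norm_toLp_fst 2 H (WithLp 2 (K₁ × K₂)) wb
  have hDclosed : IsClosed D := by
    have hc1 : Continuous fun p : WithLp 2 (H × WithLp 2 (K₁ × K₂)) =>
        ‖A₁ p.fst - s⁻¹ • p.snd.fst - c₁‖ := by
      apply Continuous.norm
      exact ((A₁.continuous.comp (WithLp.continuous_fst _ _ _)).sub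
        (((WithLp.continuous_fst _ _ _).comp (WithLp.continuous_snd _ _ _)).const_smul _)).sub continuous_const
    have hc2 : Continuous fun p : WithLp 2 (H × WithLp 2 (K₁ × K₂)) =>
        ‖A₂ p.fst - s⁻¹ • p.snd.snd - c₂‖ := by
      apply Continuous.norm
      exact ((A₂.continuous.comp (WithLp.continuous_fst _ _ _)).sub
        (((WithLp.continuous_snd _ _ _).comp (WithLp.continuous_snd _ _ _)).const_smul _)).sub continuous_const
    exact (isClosed_Iic.preimage hc1).inter (isClosed_Iic.preimage hc2)
  have hDconv : Convex ℝ D := by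
    rintro p ⟨hp1, hp2⟩ q ⟨hq1, hq2⟩ a b ha hb hab
    have hb' : b = 1 - a := by linarith
    subst hb'
    constructor
    · have he : A₁ (a • p + (1 - a) • q).fst
          - s⁻¹ • (a • p + (1 - a) • q).snd.fst - c₁
          = a • (A₁ p.fst - s⁻¹ • p.snd.fst - c₁)
            + (1 - a) • (A₁ q.fst - s⁻¹ • q.snd.fst - c₁) := by
        simp only [WithLp.add_fst, WithLp.add_snd, WithLp.smul_fst, WithLp.smul_snd,
          map_add, map_smul]
        module
      rw [he]
      calc ‖_ + _‖ ≤ ‖a • (A₁ p.fst - s⁻¹ • p.snd.fst - c₁)‖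
            + ‖(1 - a) • (A₁ q.fst - s⁻¹ • q.snd.fst - c₁)‖ := norm_add_le _ _
        _ ≤ a * ρ₁ + (1 - a) * ρ₁ := by
            rw [norm_smul, norm_smul, Real.norm_of_nonneg ha, Real.norm_of_nonneg hb]
            gcongr
        _ = ρ₁ := by ring
    · have he : A₂ (a • p + (1 - a) • q).fst
          - s⁻¹ • (a • p + (1 - a) • q).snd.snd - c₂
          = a • (A₂ p.fst - s⁻¹ • p.snd.snd - c₂)
            + (1 - a) • (A₂ q.fst - s⁻¹ • q.snd.snd - c₂) := by
        simp only [WithLp.add_fst, WithLp.add_snd, WithLp.smul_fst, WithLp.smul_snd,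
          map_add, map_smul]
        module
      rw [he]
      calc ‖_ + _‖ ≤ ‖a • (A₂ p.fst - s⁻¹ • p.snd.snd - c₂)‖
            + ‖(1 - a) • (A₂ q.fst - s⁻¹ • q.snd.snd - c₂)‖ := norm_add_le _ _
        _ ≤ a * ρ₂ + (1 - a) * ρ₂ := by
            rw [norm_smul, norm_smul, Real.norm_of_nonneg ha, Real.norm_of_nonneg hb]
            gcongr
        _ = ρ₂ := by ring
  obtain ⟨v, hvD, hvmin⟩ := exists_norm_eq_iInf_of_complete_convex ⟨pbar, hpbarD⟩
    (hDclosed.isComplete) hDconv 0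
  have hchar : ∀ q ∈ D, ⟪(0 : WithLp 2 (H × WithLp 2 (K₁ × K₂))) - v, q - v⟫ ≤ 0 :=
    (norm_eq_iInf_iff_real_inner_le_zero hDconv hvD).mp hvmin
  have hchar' : ∀ q ∈ D, 0 ≤ ⟪v, q - v⟫ := by
    intro q hq
    have := hchar q hq
    rw [zero_sub, inner_neg_left] at this
    linarith
  have hρ₁ : 0 < ρ₁ := lt_of_lt_of_le hδ (by linarith [norm_nonneg (A₁ wb - c₁)])
  have hρ₂ : 0 < ρ₂ := lt_of_lt_of_le hδ (by linarith [norm_nonneg (A₂ wb - c₂)])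
  -- norm bound on the minimizer
  have hvnorm : ‖v‖ ≤ M := by
    have hb : BddBelow (Set.range fun w : D =>
        ‖(0 : WithLp 2 (H × WithLp 2 (K₁ × K₂))) - (w : WithLp 2 (H × WithLp 2 (K₁ × K₂)))‖) :=
      ⟨0, by rintro _ ⟨w, rfl⟩; exact norm_nonneg _⟩
    have h1 : ‖(0 : WithLp 2 (H × WithLp 2 (K₁ × K₂))) - v‖ ≤ ‖(0 : WithLp 2 (H × WithLp 2 (K₁ × K₂))) - pbar‖ := by
      rw [hvmin]
      exact ciInf_le hb (⟨pbar, hpbarD⟩ : D)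
    rw [zero_sub, zero_sub, norm_neg, norm_neg, hpbarnorm] at h1
    exact h1
  set x₀ : H := v.fst with hx0def
  set y₁ : K₁ := v.snd.fst with hy1def
  set y₂ : K₂ := v.snd.snd with hy2def
  obtain ⟨hz1, hz2⟩ := hvD
  have hnormsq : ‖v‖ ^ 2 = ‖x₀‖ ^ 2 + (‖y₁‖ ^ 2 + ‖y₂‖ ^ 2) := by
    rw [WithLp.prod_norm_sq_eq_of_L2 v, WithLp.prod_norm_sq_eq_of_L2 v.snd]
  have sqle : ∀ a b : ℝ, 0 ≤ a → 0 ≤ b → a ^ 2 ≤ b ^ 2 → a ≤ b := by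
    intro a b ha hb h; nlinarith
  have hvM2 : ‖v‖ ^ 2 ≤ M ^ 2 := by nlinarith only [norm_nonneg v, hvnorm, hM0]
  have hx0M : ‖x₀‖ ≤ M := sqle _ _ (norm_nonneg _) hM0 (by linarith only [hvM2, hnormsq, sq_nonneg ‖y₁‖, sq_nonneg ‖y₂‖])
  have hy1M : ‖y₁‖ ≤ M := sqle _ _ (norm_nonneg _) hM0 (by linarith only [hvM2, hnormsq, sq_nonneg ‖y₂‖, sq_nonneg ‖x₀‖])
  have hy2M : ‖y₂‖ ≤ M := sqle _ _ (norm_nonneg _) hM0 (by linarith only [hvM2, hnormsq, sq_nonneg ‖y₁‖, sq_nonneg ‖x₀‖])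
  -- stationarity in the H direction
  have hstat0 : ∀ h : H, 0 ≤ ⟪x₀, h⟫ + s * ⟪y₁, A₁ h⟫ + s * ⟪y₂, A₂ h⟫ := by
    intro h
    set q : WithLp 2 (H × WithLp 2 (K₁ × K₂)) :=
      v + (WithLp.equiv 2 _).symm (h, (WithLp.equiv 2 _).symm (s • A₁ h, s • A₂ h)) with hqdef
    have hqfst : q.fst = x₀ + h := by
      rw [hqdef, WithLp.add_fst, WithLp.equiv_symm_fst]
    have hqsnd1 : q.snd.fst = y₁ + s • A₁ h := by
      rw [hqdef, WithLp.add_snd, WithLp.equiv_symm_snd, WithLp.add_fst, WithLp.equiv_symm_fst]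
    have hqsnd2 : q.snd.snd = y₂ + s • A₂ h := by
      rw [hqdef, WithLp.add_snd, WithLp.equiv_symm_snd, WithLp.add_snd, WithLp.equiv_symm_snd]
    have hqD : q ∈ D := by
      refine ⟨?_, ?_⟩
      · show ‖A₁ q.fst - s⁻¹ • q.snd.fst - c₁‖ ≤ ρ₁
        have he : A₁ q.fst - s⁻¹ • q.snd.fst - c₁ = A₁ x₀ - s⁻¹ • y₁ - c₁ := by
          rw [hqfst, hqsnd1, map_add, smul_add, smul_smul, inv_mul_cancel₀ hsne, one_smul]
          abel
        rw [he]; exact hz1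
      · show ‖A₂ q.fst - s⁻¹ • q.snd.snd - c₂‖ ≤ ρ₂
        have he : A₂ q.fst - s⁻¹ • q.snd.snd - c₂ = A₂ x₀ - s⁻¹ • y₂ - c₂ := by
          rw [hqfst, hqsnd2, map_add, smul_add, smul_smul, inv_mul_cancel₀ hsne, one_smul]
          abel
        rw [he]; exact hz2
    have hinc := hchar' q hqD
    rw [WithLp.prod_inner_apply] at hinc
    simp only [WithLp.ofLp_fst, WithLp.ofLp_snd] at hinc
    rw [WithLp.sub_fst, WithLp.sub_snd, hqdef] at hinc
    rw [WithLp.add_fst, WithLp.add_snd, WithLp.equiv_symm_fst, WithLp.equiv_symm_snd] at hinc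
    have e1 : v.fst + h - v.fst = h := by abel
    have e2 : v.snd + (WithLp.equiv 2 _).symm (s • A₁ h, s • A₂ h) - v.snd
        = (WithLp.equiv 2 (K₁ × K₂)).symm (s • A₁ h, s • A₂ h) := by abel
    rw [e1, e2, WithLp.prod_inner_apply] at hinc
    simp only [WithLp.ofLp_fst, WithLp.ofLp_snd] at hinc
    rw [WithLp.equiv_symm_fst, WithLp.equiv_symm_snd,
      real_inner_smul_right, real_inner_smul_right] at hinc
    linarith
  have hstat : ∀ h : H, ⟪x₀, h⟫ + s * ⟪y₁, A₁ h⟫ + s * ⟪y₂, A₂ h⟫ = 0 := by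
    intro h
    have h1 := hstat0 h
    have h2 := hstat0 (-h)
    simp only [inner_neg_right, map_neg] at h2
    linarith
  have hx0 : x₀ = -(s • (ContinuousLinearMap.adjoint A₁ y₁ + ContinuousLinearMap.adjoint A₂ y₂)) := by
    set u : H := s • (ContinuousLinearMap.adjoint A₁ y₁ + ContinuousLinearMap.adjoint A₂ y₂) with hu
    have hzero : ⟪x₀ + u, x₀ + u⟫ = 0 := by
      have h1 := hstat (x₀ + u)
      rw [inner_add_left, hu, real_inner_smul_left, inner_add_left,
        ContinuousLinearMap.adjoint_inner_left, ContinuousLinearMap.adjoint_inner_left]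
      linarith
    have h := hzero
    rw [inner_self_eq_zero] at h
    exact eq_neg_of_add_eq_zero_left h
  -- multiplier inequalities
  have hmul1 : ⟪y₁, c₁⟫ + ρ₁ * ‖y₁‖ ≤ ⟪y₁, A₁ x₀ - s⁻¹ • y₁⟫ := by
    rcases eq_or_ne y₁ 0 with h0 | h0
    · simp [h0]
    · set z' : K₁ := c₁ + (ρ₁ / ‖y₁‖) • y₁ with hz'
      set q : WithLp 2 (H × WithLp 2 (K₁ × K₂)) :=
        (WithLp.equiv 2 _).symm (x₀, (WithLp.equiv 2 _).symm (s • (A₁ x₀ - z'), y₂)) with hqdef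
      have hqfst : q.fst = x₀ := by rw [hqdef, WithLp.equiv_symm_fst]
      have hqsnd1 : q.snd.fst = s • (A₁ x₀ - z') := by
        rw [hqdef, WithLp.equiv_symm_snd, WithLp.equiv_symm_fst]
      have hqsnd2 : q.snd.snd = y₂ := by
        rw [hqdef, WithLp.equiv_symm_snd, WithLp.equiv_symm_snd]
      have hqD : q ∈ D := by
        refine ⟨?_, ?_⟩
        · show ‖A₁ q.fst - s⁻¹ • q.snd.fst - c₁‖ ≤ ρ₁
          have he : A₁ q.fst - s⁻¹ • q.snd.fst - c₁ = (ρ₁ / ‖y₁‖) • y₁ := by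
            rw [hqfst, hqsnd1, smul_smul, inv_mul_cancel₀ hsne, one_smul, hz']
            abel
          rw [he, norm_smul, Real.norm_of_nonneg (by positivity), div_mul_cancel₀]
          exact norm_ne_zero_iff.mpr h0
        · show ‖A₂ q.fst - s⁻¹ • q.snd.snd - c₂‖ ≤ ρ₂
          rw [hqfst, hqsnd2]; exact hz2
      have hinc := hchar' q hqD
      rw [WithLp.prod_inner_apply] at hinc
      simp only [WithLp.ofLp_fst, WithLp.ofLp_snd] at hinc
      rw [WithLp.sub_fst, WithLp.sub_snd, hqfst,
        WithLp.prod_inner_apply] at hinc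
      simp only [WithLp.ofLp_fst, WithLp.ofLp_snd] at hinc
      rw [WithLp.sub_fst, WithLp.sub_snd, hqsnd1, hqsnd2] at hinc
      rw [sub_self, sub_self, inner_zero_right, inner_zero_right] at hinc
      have hkey : s • (A₁ x₀ - z') - y₁ = s • (A₁ x₀ - s⁻¹ • y₁ - z') := by
        rw [smul_sub, smul_sub, smul_sub, smul_smul, mul_inv_cancel₀ hsne, one_smul]
        abel
      rw [hkey, real_inner_smul_right] at hinc
      have hzle : ⟪y₁, z'⟫ ≤ ⟪y₁, A₁ x₀ - s⁻¹ • y₁⟫ := by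
        have : 0 ≤ ⟪y₁, A₁ x₀ - s⁻¹ • y₁ - z'⟫ := nonneg_of_mul_nonneg_right ?_ hs0
        · rw [inner_sub_right] at this; linarith
        · linarith
      have hzval : ⟪y₁, z'⟫ = ⟪y₁, c₁⟫ + ρ₁ * ‖y₁‖ := by
        rw [hz', inner_add_right, real_inner_smul_right, real_inner_self_eq_norm_sq]
        have hne : ‖y₁‖ ≠ 0 := norm_ne_zero_iff.mpr h0
        field_simp
      linarith
  have hmul2 : ⟪y₂, c₂⟫ + ρ₂ * ‖y₂‖ ≤ ⟪y₂, A₂ x₀ - s⁻¹ • y₂⟫ := by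
    rcases eq_or_ne y₂ 0 with h0 | h0
    · simp [h0]
    · set z' : K₂ := c₂ + (ρ₂ / ‖y₂‖) • y₂ with hz'
      set q : WithLp 2 (H × WithLp 2 (K₁ × K₂)) :=
        (WithLp.equiv 2 _).symm (x₀, (WithLp.equiv 2 _).symm (y₁, s • (A₂ x₀ - z'))) with hqdef
      have hqfst : q.fst = x₀ := by rw [hqdef, WithLp.equiv_symm_fst]
      have hqsnd1 : q.snd.fst = y₁ := by
        rw [hqdef, WithLp.equiv_symm_snd, WithLp.equiv_symm_fst]
      have hqsnd2 : q.snd.snd = s • (A₂ x₀ - z') := by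
        rw [hqdef, WithLp.equiv_symm_snd, WithLp.equiv_symm_snd]
      have hqD : q ∈ D := by
        refine ⟨?_, ?_⟩
        · show ‖A₁ q.fst - s⁻¹ • q.snd.fst - c₁‖ ≤ ρ₁
          rw [hqfst, hqsnd1]; exact hz1
        · show ‖A₂ q.fst - s⁻¹ • q.snd.snd - c₂‖ ≤ ρ₂
          have he : A₂ q.fst - s⁻¹ • q.snd.snd - c₂ = (ρ₂ / ‖y₂‖) • y₂ := by
            rw [hqfst, hqsnd2, smul_smul, inv_mul_cancel₀ hsne, one_smul, hz']
            abel
          rw [he, norm_smul, Real.norm_of_nonneg (by positivity), div_mul_cancel₀]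
          exact norm_ne_zero_iff.mpr h0
      have hinc := hchar' q hqD
      rw [WithLp.prod_inner_apply] at hinc
      simp only [WithLp.ofLp_fst, WithLp.ofLp_snd] at hinc
      rw [WithLp.sub_fst, WithLp.sub_snd, hqfst,
        WithLp.prod_inner_apply] at hinc
      simp only [WithLp.ofLp_fst, WithLp.ofLp_snd] at hinc
      rw [WithLp.sub_fst, WithLp.sub_snd, hqsnd1, hqsnd2] at hinc
      rw [sub_self, sub_self, inner_zero_right, inner_zero_right] at hinc
      have hkey : s • (A₂ x₀ - z') - y₂ = s • (A₂ x₀ - s⁻¹ • y₂ - z') := by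
        rw [smul_sub, smul_sub, smul_sub, smul_smul, mul_inv_cancel₀ hsne, one_smul]
        abel
      rw [hkey, real_inner_smul_right] at hinc
      have hzle : ⟪y₂, z'⟫ ≤ ⟪y₂, A₂ x₀ - s⁻¹ • y₂⟫ := by
        have : 0 ≤ ⟪y₂, A₂ x₀ - s⁻¹ • y₂ - z'⟫ := nonneg_of_mul_nonneg_right ?_ hs0
        · rw [inner_sub_right] at this; linarith
        · linarith
      have hzval : ⟪y₂, z'⟫ = ⟪y₂, c₂⟫ + ρ₂ * ‖y₂‖ := by
        rw [hz', inner_add_right, real_inner_smul_right, real_inner_self_eq_norm_sq]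
        have hne : ‖y₂‖ ≠ 0 := norm_ne_zero_iff.mpr h0
        field_simp
      linarith
  -- the almost-feasible point and final estimates
  set σ : ℝ := M / s with hσ
  have hσ0 : 0 ≤ σ := div_nonneg hM0 hs0.le
  have hσδ : 0 < σ + δ := by linarith
  set t : ℝ := σ / (σ + δ) with htdef
  have ht0 : 0 ≤ t := div_nonneg hσ0 hσδ.le
  have ht1 : t ≤ 1 := by rw [htdef, div_le_one hσδ]; linarith
  have htσ : t * (σ + δ) = σ := by rw [htdef]; field_simp
  set w' : H := (1 - t) • x₀ + t • wb with hw'def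
  have hsinvM : s⁻¹ * M = σ := by rw [hσ]; ring
  have hA1x0 : ‖A₁ x₀ - c₁‖ ≤ ρ₁ + σ := by
    have he : A₁ x₀ - c₁ = (A₁ x₀ - s⁻¹ • y₁ - c₁) + s⁻¹ • y₁ := by abel
    rw [he]
    have h2 : ‖s⁻¹ • y₁‖ ≤ σ := by
      rw [norm_smul, Real.norm_of_nonneg (by positivity), ← hsinvM]
      gcongr
    calc ‖(A₁ x₀ - s⁻¹ • y₁ - c₁) + s⁻¹ • y₁‖
        ≤ ‖A₁ x₀ - s⁻¹ • y₁ - c₁‖ + ‖s⁻¹ • y₁‖ := norm_add_le _ _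
      _ ≤ ρ₁ + σ := add_le_add hz1 h2
  have hA2x0 : ‖A₂ x₀ - c₂‖ ≤ ρ₂ + σ := by
    have he : A₂ x₀ - c₂ = (A₂ x₀ - s⁻¹ • y₂ - c₂) + s⁻¹ • y₂ := by abel
    rw [he]
    have h2 : ‖s⁻¹ • y₂‖ ≤ σ := by
      rw [norm_smul, Real.norm_of_nonneg (by positivity), ← hsinvM]
      gcongr
    calc ‖(A₂ x₀ - s⁻¹ • y₂ - c₂) + s⁻¹ • y₂‖
        ≤ ‖A₂ x₀ - s⁻¹ • y₂ - c₂‖ + ‖s⁻¹ • y₂‖ := norm_add_le _ _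
      _ ≤ ρ₂ + σ := add_le_add hz2 h2
  have hfeas1 : ‖A₁ w' - c₁‖ ≤ ρ₁ := by
    have he : A₁ w' - c₁ = (1 - t) • (A₁ x₀ - c₁) + t • (A₁ wb - c₁) := by
      rw [hw'def, map_add, map_smul, map_smul]
      module
    rw [he]
    calc ‖(1 - t) • (A₁ x₀ - c₁) + t • (A₁ wb - c₁)‖
        ≤ ‖(1 - t) • (A₁ x₀ - c₁)‖ + ‖t • (A₁ wb - c₁)‖ := norm_add_le _ _
      _ = (1 - t) * ‖A₁ x₀ - c₁‖ + t * ‖A₁ wb - c₁‖ := by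
          rw [norm_smul, norm_smul, Real.norm_of_nonneg (by linarith), Real.norm_of_nonneg ht0]
      _ ≤ (1 - t) * (ρ₁ + σ) + t * (ρ₁ - δ) := by gcongr <;> linarith
      _ = ρ₁ + σ - t * (σ + δ) - t * σ + t * σ := by ring
      _ = ρ₁ := by rw [htσ]; ring
  have hfeas2 : ‖A₂ w' - c₂‖ ≤ ρ₂ := by
    have he : A₂ w' - c₂ = (1 - t) • (A₂ x₀ - c₂) + t • (A₂ wb - c₂) := by
      rw [hw'def, map_add, map_smul, map_smul]
      module
    rw [he]
    calc ‖(1 - t) • (A₂ x₀ - c₂) + t • (A₂ wb - c₂)‖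
        ≤ ‖(1 - t) • (A₂ x₀ - c₂)‖ + ‖t • (A₂ wb - c₂)‖ := norm_add_le _ _
      _ = (1 - t) * ‖A₂ x₀ - c₂‖ + t * ‖A₂ wb - c₂‖ := by
          rw [norm_smul, norm_smul, Real.norm_of_nonneg (by linarith), Real.norm_of_nonneg ht0]
      _ ≤ (1 - t) * (ρ₂ + σ) + t * (ρ₂ - δ) := by gcongr <;> linarith
      _ = ρ₂ + σ - t * (σ + δ) - t * σ + t * σ := by ring
      _ = ρ₂ := by rw [htσ]; ring
  refine ⟨(-(s • y₁), -(s • y₂)), w', ⟨hfeas1, hfeas2⟩, ?_⟩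
  have hadj : ContinuousLinearMap.adjoint A₁ (-(s • y₁))
      + ContinuousLinearMap.adjoint A₂ (-(s • y₂)) = x₀ := by
    rw [map_neg, map_neg, map_smul, map_smul, hx0]
    module
  -- value of the dual functional at f
  have hsum : s * ⟪y₁, A₁ x₀ - s⁻¹ • y₁⟫ + s * ⟪y₂, A₂ x₀ - s⁻¹ • y₂⟫
      = -‖x₀‖ ^ 2 - ‖y₁‖ ^ 2 - ‖y₂‖ ^ 2 := by
    have h1 := hstat x₀
    rw [real_inner_self_eq_norm_sq] at h1
    rw [inner_sub_right, inner_sub_right, real_inner_smul_right, real_inner_smul_right,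
      real_inner_self_eq_norm_sq, real_inner_self_eq_norm_sq]
    have hss : s * s⁻¹ = 1 := mul_inv_cancel₀ hsne
    linear_combination h1 - (‖y₁‖ ^ 2 + ‖y₂‖ ^ 2) * hss
  have hΦ : (1 / 2) * ‖ContinuousLinearMap.adjoint A₁ (-(s • y₁), -(s • y₂)).1
        + ContinuousLinearMap.adjoint A₂ (-(s • y₁), -(s • y₂)).2‖ ^ 2
      - ⟪(-(s • y₁), -(s • y₂)).1, c₁⟫ - ⟪(-(s • y₁), -(s • y₂)).2, c₂⟫
      + ρ₁ * ‖(-(s • y₁), -(s • y₂)).1‖ + ρ₂ * ‖(-(s • y₁), -(s • y₂)).2‖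
      ≤ -(1 / 2) * ‖x₀‖ ^ 2 - ‖y₁‖ ^ 2 - ‖y₂‖ ^ 2 := by
    simp only [hadj]
    rw [inner_neg_left, inner_neg_left, real_inner_smul_left, real_inner_smul_left,
      norm_neg, norm_neg, norm_smul, norm_smul, Real.norm_of_nonneg hs0.le]
    have e1 : s * (⟪y₁, c₁⟫ + ρ₁ * ‖y₁‖) ≤ s * ⟪y₁, A₁ x₀ - s⁻¹ • y₁⟫ :=
      mul_le_mul_of_nonneg_left hmul1 hs0.le
    have e2 : s * (⟪y₂, c₂⟫ + ρ₂ * ‖y₂‖) ≤ s * ⟪y₂, A₂ x₀ - s⁻¹ • y₂⟫ :=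
      mul_le_mul_of_nonneg_left hmul2 hs0.le
    linarith only [hsum, e1, e2]
  have hw'n : ‖w'‖ ≤ ‖x₀‖ + t * M := by
    calc ‖w'‖ ≤ ‖(1 - t) • x₀‖ + ‖t • wb‖ := norm_add_le _ _
      _ = (1 - t) * ‖x₀‖ + t * M := by
          rw [norm_smul, norm_smul, Real.norm_of_nonneg (by linarith), Real.norm_of_nonneg ht0, hM]
      _ ≤ ‖x₀‖ + t * M := by
          have h := mul_nonneg ht0 (norm_nonneg x₀)
          linarith only [h]
  have hw'sq : ‖w'‖ ^ 2 ≤ (‖x₀‖ + t * M) ^ 2 :=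
    pow_le_pow_left₀ (norm_nonneg w') hw'n 2
  have h2tm : (1 / 2) * ‖ContinuousLinearMap.adjoint A₁ (-(s • y₁), -(s • y₂)).1
        + ContinuousLinearMap.adjoint A₂ (-(s • y₁), -(s • y₂)).2‖ ^ 2
      - ⟪(-(s • y₁), -(s • y₂)).1, c₁⟫ - ⟪(-(s • y₁), -(s • y₂)).2, c₂⟫
      + ρ₁ * ‖(-(s • y₁), -(s • y₂)).1‖ + ρ₂ * ‖(-(s • y₁), -(s • y₂)).2‖
      + (1 / 2) * ‖w'‖ ^ 2 ≤ 2 * t * M ^ 2 := by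
    have e3 : t * M * ‖x₀‖ ≤ t * M * M :=
      mul_le_mul_of_nonneg_left hx0M (mul_nonneg ht0 hM0)
    have e4 : t * t ≤ t := by
      have h := mul_le_mul_of_nonneg_left ht1 ht0
      linarith only [h]
    have e4' : t * t * (M * M) ≤ t * (M * M) :=
      mul_le_mul_of_nonneg_right e4 (mul_nonneg hM0 hM0)
    have hexp : (‖x₀‖ + t * M) ^ 2 = ‖x₀‖ ^ 2 + 2 * (t * M * ‖x₀‖) + t * t * (M * M) := by
      ring
    linarith only [hΦ, hw'sq, e3, e4', hexp, sq_nonneg ‖y₁‖, sq_nonneg ‖y₂‖,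
      mul_nonneg ht0 (mul_nonneg hM0 hM0)]
  have htδ : t * δ ≤ σ := by
    have h := mul_nonneg ht0 hσ0
    linarith only [h, htσ]
  have htδs : t * δ * s ≤ M := by
    have h1 : t * δ * s ≤ σ * s := by
      have h := mul_le_mul_of_nonneg_right htδ hs0.le
      linarith only [h]
    have h2 : σ * s = M := by rw [hσ]; field_simp
    linarith only [h1, h2]
  have hlast : 2 * t * M ^ 2 ≤ ε := by
    have h5 : 2 * M ^ 2 * (t * δ * s) ≤ 2 * M ^ 2 * M :=
      mul_le_mul_of_nonneg_left htδs (by positivity)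
    have h6 : (2 * t * M ^ 2) * (δ * s) ≤ ε * (δ * s) := by
      have h7 : 2 * M ^ 2 * M = 2 * M ^ 3 := by ring
      have h8 : (2 * t * M ^ 2) * (δ * s) = 2 * M ^ 2 * (t * δ * s) := by ring
      have h9 : ε * (δ * s) = s * (δ * ε) := by ring
      linarith only [h5, hsbig, h7, h8, h9]
    exact le_of_mul_le_mul_right h6 (mul_pos hδ hs0)
  linarith only [h2tm, hlast]

set_option maxHeartbeats 4000000 in
/-- Fenchel–Rockafellar duality for the leader's minimal-norm control problem:
with A = (A₁, A₂) : H → K₁ × K₂ of dense range and C the product of closed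
balls, inf {½‖w‖² : A w ∈ C}
= −inf {½‖A*(f⁰,f¹)‖² − ⟨f⁰,c₁⟩ − ⟨f¹,c₂⟩ + ρ₁‖f⁰‖ + ρ₂‖f¹‖}. -/
theorem stmt_13 {H K₁ K₂ : Type*}
    [NormedAddCommGroup H] [InnerProductSpace ℝ H] [CompleteSpace H]
    [NormedAddCommGroup K₁] [InnerProductSpace ℝ K₁] [CompleteSpace K₁]
    [NormedAddCommGroup K₂] [InnerProductSpace ℝ K₂] [CompleteSpace K₂]
    (A₁ : H →L[ℝ] K₁) (A₂ : H →L[ℝ] K₂)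
    (hdense : DenseRange (fun w : H => (A₁ w, A₂ w)))
    (c₁ : K₁) (c₂ : K₂) (ρ₁ ρ₂ : ℝ) (hρ₁ : 0 < ρ₁) (hρ₂ : 0 < ρ₂) :
    sInf ((fun w : H => (1 / 2) * ‖w‖ ^ 2) ''
        {w : H | ‖A₁ w - c₁‖ ≤ ρ₁ ∧ ‖A₂ w - c₂‖ ≤ ρ₂})
      = -sInf (Set.range fun f : K₁ × K₂ =>
          (1 / 2) * ‖ContinuousLinearMap.adjoint A₁ f.1
              + ContinuousLinearMap.adjoint A₂ f.2‖ ^ 2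
            - ⟪f.1, c₁⟫ - ⟪f.2, c₂⟫ + ρ₁ * ‖f.1‖ + ρ₂ * ‖f.2‖) := by
  classical
  set δ : ℝ := min ρ₁ ρ₂ / 2 with hδdef
  have hδ : 0 < δ := div_pos (lt_min hρ₁ hρ₂) two_pos
  obtain ⟨wb, hwb⟩ := hdense.exists_dist_lt (c₁, c₂) hδ
  rw [Prod.dist_eq] at hwb
  have hδρ₁ : δ ≤ ρ₁ / 2 := by
    rw [hδdef]
    have := min_le_left ρ₁ ρ₂
    linarith
  have hδρ₂ : δ ≤ ρ₂ / 2 := by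
    rw [hδdef]
    have := min_le_right ρ₁ ρ₂
    linarith
  have hwb1 : ‖A₁ wb - c₁‖ ≤ ρ₁ - δ := by
    have h1 : dist c₁ (A₁ wb) < δ :=
      lt_of_le_of_lt (le_max_left (dist (c₁, c₂).1 (A₁ wb, A₂ wb).1)
        (dist (c₁, c₂).2 (A₁ wb, A₂ wb).2)) hwb
    rw [dist_comm, dist_eq_norm] at h1
    linarith
  have hwb2 : ‖A₂ wb - c₂‖ ≤ ρ₂ - δ := by
    have h1 : dist c₂ (A₂ wb) < δ :=
      lt_of_le_of_lt (le_max_right (dist (c₁, c₂).1 (A₁ wb, A₂ wb).1)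
        (dist (c₁, c₂).2 (A₁ wb, A₂ wb).2)) hwb
    rw [dist_comm, dist_eq_norm] at h1
    linarith
  set SP : Set ℝ := (fun w : H => (1 / 2) * ‖w‖ ^ 2) ''
      {w : H | ‖A₁ w - c₁‖ ≤ ρ₁ ∧ ‖A₂ w - c₂‖ ≤ ρ₂} with hSPdef
  set SD : Set ℝ := Set.range fun f : K₁ × K₂ =>
      (1 / 2) * ‖ContinuousLinearMap.adjoint A₁ f.1
          + ContinuousLinearMap.adjoint A₂ f.2‖ ^ 2
        - ⟪f.1, c₁⟫ - ⟪f.2, c₂⟫ + ρ₁ * ‖f.1‖ + ρ₂ * ‖f.2‖ with hSDdef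
  -- weak duality
  have wd : ∀ w : H, ‖A₁ w - c₁‖ ≤ ρ₁ → ‖A₂ w - c₂‖ ≤ ρ₂ → ∀ f : K₁ × K₂,
      -((1 / 2) * ‖w‖ ^ 2) ≤ (1 / 2) * ‖ContinuousLinearMap.adjoint A₁ f.1
          + ContinuousLinearMap.adjoint A₂ f.2‖ ^ 2
        - ⟪f.1, c₁⟫ - ⟪f.2, c₂⟫ + ρ₁ * ‖f.1‖ + ρ₂ * ‖f.2‖ := by
    intro w hw1 hw2 f
    have h1 : ⟪f.1, c₁⟫ ≤ ⟪f.1, A₁ w⟫ + ρ₁ * ‖f.1‖ := by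
      have h := real_inner_le_norm f.1 (c₁ - A₁ w)
      rw [inner_sub_right] at h
      have h2 : ‖c₁ - A₁ w‖ ≤ ρ₁ := by rw [norm_sub_rev]; exact hw1
      have h3 : ‖f.1‖ * ‖c₁ - A₁ w‖ ≤ ‖f.1‖ * ρ₁ :=
        mul_le_mul_of_nonneg_left h2 (norm_nonneg f.1)
      linarith only [h, h3]
    have h2 : ⟪f.2, c₂⟫ ≤ ⟪f.2, A₂ w⟫ + ρ₂ * ‖f.2‖ := by
      have h := real_inner_le_norm f.2 (c₂ - A₂ w)
      rw [inner_sub_right] at h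
      have h2 : ‖c₂ - A₂ w‖ ≤ ρ₂ := by rw [norm_sub_rev]; exact hw2
      have h3 : ‖f.2‖ * ‖c₂ - A₂ w‖ ≤ ‖f.2‖ * ρ₂ :=
        mul_le_mul_of_nonneg_left h2 (norm_nonneg f.2)
      linarith only [h, h3]
    have h3 : ⟪f.1, A₁ w⟫ + ⟪f.2, A₂ w⟫
        = ⟪ContinuousLinearMap.adjoint A₁ f.1 + ContinuousLinearMap.adjoint A₂ f.2, w⟫ := by
      rw [inner_add_left, ContinuousLinearMap.adjoint_inner_left,
        ContinuousLinearMap.adjoint_inner_left]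
    have h4 : ⟪ContinuousLinearMap.adjoint A₁ f.1 + ContinuousLinearMap.adjoint A₂ f.2, w⟫
        ≤ (1 / 2) * ‖ContinuousLinearMap.adjoint A₁ f.1
            + ContinuousLinearMap.adjoint A₂ f.2‖ ^ 2 + (1 / 2) * ‖w‖ ^ 2 := by
      have h5 := norm_sub_sq_real (ContinuousLinearMap.adjoint A₁ f.1
        + ContinuousLinearMap.adjoint A₂ f.2) w
      have h6 := sq_nonneg ‖ContinuousLinearMap.adjoint A₁ f.1
        + ContinuousLinearMap.adjoint A₂ f.2 - w‖
      linarith only [h5, h6]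
    linarith only [h1, h2, h3, h4]
  have hwbfeas : wb ∈ {w : H | ‖A₁ w - c₁‖ ≤ ρ₁ ∧ ‖A₂ w - c₂‖ ≤ ρ₂} :=
    ⟨by linarith, by linarith⟩
  have hSPne : SP.Nonempty := ⟨(1 / 2) * ‖wb‖ ^ 2, ⟨wb, hwbfeas, rfl⟩⟩
  have hSPbdd : BddBelow SP := by
    refine ⟨0, ?_⟩
    rintro a ⟨w, _, rfl⟩
    positivity
  have hSDne : SD.Nonempty := ⟨_, Set.mem_range_self (0, 0)⟩
  have hlb : ∀ b ∈ SD, -sInf SP ≤ b := by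
    rintro b ⟨f, rfl⟩
    have hP : -((1 / 2) * ‖ContinuousLinearMap.adjoint A₁ f.1
          + ContinuousLinearMap.adjoint A₂ f.2‖ ^ 2
        - ⟪f.1, c₁⟫ - ⟪f.2, c₂⟫ + ρ₁ * ‖f.1‖ + ρ₂ * ‖f.2‖) ≤ sInf SP := by
      refine le_csInf hSPne ?_
      rintro a ⟨w, ⟨hw1, hw2⟩, rfl⟩
      have := wd w hw1 hw2 f
      linarith only [this]
    simp only
    linarith only [hP]
  have hSDbdd : BddBelow SD := ⟨-sInf SP, hlb⟩
  have hD_ge : -sInf SP ≤ sInf SD := le_csInf hSDne hlb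
  have hD_le : sInf SD ≤ -sInf SP := by
    refine le_of_forall_pos_le_add ?_
    intro ε hε
    obtain ⟨f, w, ⟨hw1, hw2⟩, hkey⟩ := stmt13_key A₁ A₂ c₁ c₂ ρ₁ ρ₂ wb δ hδ hwb1 hwb2 hε
    have hP : sInf SP ≤ (1 / 2) * ‖w‖ ^ 2 := csInf_le hSPbdd ⟨w, ⟨hw1, hw2⟩, rfl⟩
    have hf : sInf SD ≤ (1 / 2) * ‖ContinuousLinearMap.adjoint A₁ f.1
          + ContinuousLinearMap.adjoint A₂ f.2‖ ^ 2
        - ⟪f.1, c₁⟫ - ⟪f.2, c₂⟫ + ρ₁ * ‖f.1‖ + ρ₂ * ‖f.2‖ :=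
      csInf_le hSDbdd ⟨f, rfl⟩
    linarith only [hP, hf, hkey]
  linarith only [hD_ge, hD_le]
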